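/- For any distinct i, j, k ∈ {1,2,3}, the image under φⱼₖ of the subgroup of A generated by {eᵢ, mⱼ, mₖ} equals the subgroup generated by {eᵢ, mⱼ + eₖ, mₖ + eⱼ}, and this image is a different subgroup from the one generated by {eᵢ, mⱼ, mₖ}; i.e. the S-domain wall s⁽²⁾ⱼₖ does not condense on the (eᵢ, mⱼ, mₖ)-boundary but produces a nested boundary with condensation set (eᵢ, mⱼeₖ, mₖeⱼ). -/
import Mathlib


/-- The group of topological excitations of three copies of the 3D toric code:
pairs (a, b) of electric/magnetic labels in `(ZMod 2)³`. -/
abbrev A : Type := (Fin 3 → ZMod 2) × (Fin 3 → ZMod 2)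

/-- The electric charge `eᵢ`. -/
def e (i : Fin 3) : A := (Pi.single i 1, 0)

/-- The magnetic flux `mᵢ`. -/
def m (i : Fin 3) : A := (0, Pi.single i 1)

/-- The mutual-statistics pairing `ω((a,b),(a',b')) = a·b' + a'·b`. -/
def ω (x y : A) : ZMod 2 :=
  (∑ t, x.1 t * y.2 t) + (∑ t, y.1 t * x.2 t)

/-- The action of the S-domain wall `s⁽²⁾ᵢⱼ` on excitations:
`(a, b) ↦ (a + bⱼ•δᵢ + bᵢ•δⱼ, b)`. -/
def φ (i j : Fin 3) (x : A) : A :=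
  (x.1 + x.2 j • (Pi.single i 1 : Fin 3 → ZMod 2) + x.2 i • (Pi.single j 1 : Fin 3 → ZMod 2), x.2)

/-- A subgroup `L` of `A` is Lagrangian if it equals its orthogonal complement
with respect to the pairing `ω`. -/
def IsLagrangian (L : AddSubgroup A) : Prop :=
  (L : Set A) = {x : A | ∀ l ∈ L, ω x l = 0}

/-- `φ i j` as an additive monoid homomorphism. -/
def φHom (i j : Fin 3) : A →+ A where
  toFun := φ i j
  map_zero' := by simp [φ]
  map_add' x y := by
    simp only [φ, Prod.fst_add, Prod.snd_add, Pi.add_apply, add_smul, Prod.mk_add_mk,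
      Prod.mk.injEq]
    constructor
    · abel
    · trivial

/-- Evaluation of the first (electric) component at `k`, as a homomorphism. -/
def χ (k : Fin 3) : A →+ ZMod 2 :=
  (Pi.evalAddMonoidHom (fun _ => ZMod 2) k).comp (AddMonoidHom.fst _ _)

theorem stmt_9 (i j k : Fin 3) (hij : i ≠ j) (hjk : j ≠ k) (hik : i ≠ k) :
    φ j k '' ((AddSubgroup.closure {e i, m j, m k} : AddSubgroup A) : Set A) =
      ((AddSubgroup.closure {e i, m j + e k, m k + e j} : AddSubgroup A) : Set A) ∧
    AddSubgroup.closure {e i, m j + e k, m k + e j} ≠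
      AddSubgroup.closure {e i, m j, m k} := by
  have hφe : φ j k (e i) = e i := by
    simp [φ, e, Pi.single_eq_of_ne (Ne.symm hjk), Pi.single_eq_of_ne]
  have hφmj : φ j k (m j) = m j + e k := by
    simp [φ, m, e, Pi.single_eq_of_ne hjk, Pi.single_eq_of_ne (Ne.symm hjk), Prod.ext_iff]
  have hφmk : φ j k (m k) = m k + e j := by
    simp [φ, m, e, Pi.single_eq_of_ne hjk, Pi.single_eq_of_ne (Ne.symm hjk), Prod.ext_iff]
  constructor
  · have himg : φ j k '' {e i, m j, m k} = {e i, m j + e k, m k + e j} := by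
      rw [Set.image_insert_eq, Set.image_insert_eq, Set.image_singleton,
        hφe, hφmj, hφmk]
    have := AddMonoidHom.map_closure (φHom j k) {e i, m j, m k}
    have hcoe : φ j k '' ((AddSubgroup.closure {e i, m j, m k} : AddSubgroup A) : Set A)
        = ((AddSubgroup.closure {e i, m j, m k}).map (φHom j k) : Set A) := rfl
    rw [hcoe, this, show ⇑(φHom j k) '' {e i, m j, m k} = {e i, m j + e k, m k + e j} from himg]
  · intro h
    have hmem : m j + e k ∈ AddSubgroup.closure ({e i, m j, m k} : Set A) := by
      rw [← h]
      exact AddSubgroup.subset_closure (by simp)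
    have hker : AddSubgroup.closure ({e i, m j, m k} : Set A) ≤ (χ k).ker := by
      rw [AddSubgroup.closure_le]
      intro x hx
      simp only [Set.mem_insert_iff, Set.mem_singleton_iff] at hx
      rcases hx with rfl | rfl | rfl <;>
        simp [χ, e, m, AddMonoidHom.mem_ker, Pi.single_eq_of_ne (Ne.symm hik)]
    have := hker hmem
    rw [AddMonoidHom.mem_ker] at this
    simp [χ, m, e, Pi.single_eq_of_ne hjk] at this
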